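/- arXiv:1406.6413 — 2 statements merged into one kernel-verified Lean document; each statement's English description precedes it below -/
import Mathlib

section
/- For every m > 0, the m-th power digraph D(A)^m contains both A^m and R^m inside the connected component Δ_m of the diagonal {(c,...,c) : c ∈ D(A)}. -/
/-- The positions `i ∈ [k]` at which `a` equals the `i`-th entry of `r`. -/
def idxSet {A : Type} [DecidableEq A] {k : ℕ} (a : A) (r : Fin k → A) : Finset (Fin k) :=
  Finset.univ.filter (fun i => a = r i)

/-- Direction pattern of the oriented path `Q_I`: a single edge, then for each
`l ∈ [k]` a single edge (if `l ∈ I`) or a zigzag (otherwise), then a single edge. -/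
def qdirs {k : ℕ} (I : Finset (Fin k)) : List Bool :=
  [true] ++ ((List.finRange k).flatMap
    (fun l => if l ∈ I then [true] else [true, false, true])) ++ [true]

/-- Edge relation of the oriented path with direction pattern `ds`
(vertices are `0, 1, ..., ds.length`). -/
def pedge (ds : List Bool) (x y : ℕ) : Prop :=
  (y = x + 1 ∧ x < ds.length ∧ ds.getD x false = true) ∨
  (x = y + 1 ∧ y < ds.length ∧ ds.getD y false = false)

/-- Number of edges of the connecting path `P_(a,r) = Q_{idxSet a r}`. -/
def plen {A : Type} [DecidableEq A] {k : ℕ} (a : A) (r : Fin k → A) : ℕ :=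
  (qdirs (idxSet a r)).length

/-- Vertices of the digraph `D(A)` for the structure `(A; R)`. -/
inductive DVert {A : Type} [DecidableEq A] {k : ℕ} (R : Set (Fin k → A)) : Type where
  | base : A → DVert R
  | top : (r : Fin k → A) → r ∈ R → DVert R
  | inner : (a : A) → (r : Fin k → A) → r ∈ R → (j : ℕ) → 0 < j → j < plen a r → DVert R

/-- `isAt v a r x` : vertex `v` of `D(A)` sits at position `x` of the connecting path
`P_(a,r)`. -/
def isAt {A : Type} [DecidableEq A] {k : ℕ} {R : Set (Fin k → A)} :
    DVert R → A → (Fin k → A) → ℕ → Prop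
  | .base a', a, _, x => a' = a ∧ x = 0
  | .top r' _, a, r, x => r' = r ∧ x = plen a r
  | .inner a' r' _ j _ _, a, r, x => a' = a ∧ r' = r ∧ x = j

/-- The edge relation of the digraph `D(A)`. -/
def dedge {A : Type} [DecidableEq A] {k : ℕ} {R : Set (Fin k → A)}
    (u v : DVert R) : Prop :=
  ∃ a r, r ∈ R ∧ ∃ x y, isAt u a r x ∧ isAt v a r y ∧
    pedge (qdirs (idxSet a r)) x y

/-- Height of position `x` along a path with direction pattern `ds`. -/
def phgt (ds : List Bool) (x : ℕ) : ℤ :=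
  ((ds.take x).count true : ℤ) - ((ds.take x).count false : ℤ)

/-- The level function of the balanced digraph `D(A)`. -/
def lvlD {A : Type} [DecidableEq A] {k : ℕ} {R : Set (Fin k → A)} : DVert R → ℕ
  | .base _ => 0
  | .top _ _ => k + 2
  | .inner a r _ j _ _ => (phgt (qdirs (idxSet a r)) j).toNat

/-- `walkAlong ds u v` : one can walk in `D(A)` from `u` to `v` following the
oriented path with direction pattern `ds` (i.e. there is a homomorphism of the path
into `D(A)` sending the initial vertex to `u` and the terminal vertex to `v`). -/
def walkAlong {A : Type} [DecidableEq A] {k : ℕ} {R : Set (Fin k → A)}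
    (ds : List Bool) (u v : DVert R) : Prop :=
  ∃ φ : ℕ → DVert R, φ 0 = u ∧ φ ds.length = v ∧
    ∀ x < ds.length,
      (ds.getD x false = true → dedge (φ x) (φ (x + 1))) ∧
      (ds.getD x false = false → dedge (φ (x + 1)) (φ x))

/-- Connectivity (by oriented paths, i.e. ignoring edge directions) in the power
digraph `D(A)^m`. -/
def connM {A : Type} [DecidableEq A] {k : ℕ} {R : Set (Fin k → A)} {m : ℕ}
    (u v : Fin m → DVert R) : Prop :=
  Relation.ReflTransGen
    (fun x y : Fin m → DVert R =>
      (∀ i, dedge (x i) (y i)) ∨ (∀ i, dedge (y i) (x i))) u v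

section Aux

variable {A : Type} [DecidableEq A] {k : ℕ} {R : Set (Fin k → A)}

lemma plen_pos (a : A) (r : Fin k → A) : 0 < plen a r := by
  simp [plen, qdirs]

/-- The vertex of `D(A)` at position `j` of the connecting path `P_(a,r)`. -/
def vtx (a : A) (r : Fin k → A) (hr : r ∈ R) (j : ℕ) : DVert R :=
  if h0 : j = 0 then .base a
  else if hl : j < plen a r then .inner a r hr j (Nat.pos_of_ne_zero h0) hl
  else .top r hr

lemma vtx_zero (a : A) (r : Fin k → A) (hr : r ∈ R) : vtx a r hr 0 = .base a := by
  simp [vtx]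

lemma vtx_plen (a : A) (r : Fin k → A) (hr : r ∈ R) :
    vtx a r hr (plen a r) = .top r hr := by
  have := plen_pos a r
  simp [vtx]
  omega

lemma isAt_vtx (a : A) (r : Fin k → A) (hr : r ∈ R) {j : ℕ} (hj : j ≤ plen a r) :
    isAt (vtx a r hr j) a r j := by
  unfold vtx
  split_ifs with h0 hl
  · simp [isAt, h0]
  · simp [isAt]
  · have : j = plen a r := by omega
    simp [isAt, this]

lemma dedge_vtx {a : A} {r : Fin k → A} (hr : r ∈ R) {x y : ℕ}
    (h : pedge (qdirs (idxSet a r)) x y) :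
    dedge (vtx a r hr x) (vtx a r hr y) := by
  have hlen : (qdirs (idxSet a r)).length = plen a r := rfl
  have hx : x ≤ plen a r := by rcases h with ⟨h1, h2, _⟩ | ⟨h1, h2, _⟩ <;> omega
  have hy : y ≤ plen a r := by rcases h with ⟨h1, h2, _⟩ | ⟨h1, h2, _⟩ <;> omega
  exact ⟨a, r, hr, x, y, isAt_vtx a r hr hx, isAt_vtx a r hr hy, h⟩

lemma dedge_fwd {a : A} {r : Fin k → A} (hr : r ∈ R) {x : ℕ}
    (hx : x < (qdirs (idxSet a r)).length)
    (ht : (qdirs (idxSet a r)).getD x false = true) :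
    dedge (vtx a r hr x) (vtx a r hr (x + 1)) :=
  dedge_vtx hr (Or.inl ⟨rfl, hx, ht⟩)

lemma dedge_bwd {a : A} {r : Fin k → A} (hr : r ∈ R) {x : ℕ}
    (hx : x < (qdirs (idxSet a r)).length)
    (hf : (qdirs (idxSet a r)).getD x false = false) :
    dedge (vtx a r hr (x + 1)) (vtx a r hr x) :=
  dedge_vtx hr (Or.inr ⟨rfl, hx, hf⟩)

lemma walkAlong_one {u v : DVert R} (h : dedge u v) : walkAlong [true] u v := by
  refine ⟨fun x => if x = 0 then u else v, by simp, by simp, ?_⟩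
  intro x hx
  have : x = 0 := by simpa using hx
  subst this
  constructor
  · intro _; simpa using h
  · intro hc; simp at hc

lemma walkAlong_zig {u v : DVert R} (h : dedge u v) :
    walkAlong [true, false, true] u v := by
  refine ⟨fun x => if x % 2 = 0 then u else v, by simp, by norm_num, ?_⟩
  intro x hx
  simp only [List.length_cons, List.length_nil] at hx
  interval_cases x <;> constructor <;> intro hb <;> simp_all

lemma walkAlong_three {u v w z : DVert R} (h1 : dedge u v) (h2 : dedge w v)
    (h3 : dedge w z) : walkAlong [true, false, true] u z := by
  refine ⟨fun x => [u, v, w, z].getD x z, by simp, by norm_num, ?_⟩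
  intro x hx
  simp only [List.length_cons, List.length_nil] at hx
  interval_cases x <;> constructor <;> intro hb <;> simp_all

lemma walkAlong_append {ds1 ds2 : List Bool} {u v w : DVert R}
    (h1 : walkAlong ds1 u v) (h2 : walkAlong ds2 v w) :
    walkAlong (ds1 ++ ds2) u w := by
  obtain ⟨φ1, hφ10, hφ1l, hφ1s⟩ := h1
  obtain ⟨φ2, hφ20, hφ2l, hφ2s⟩ := h2
  refine ⟨fun x => if x < ds1.length then φ1 x else φ2 (x - ds1.length), ?_, ?_, ?_⟩
  · by_cases h : 0 < ds1.length
    · simpa [h] using hφ10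
    · have h0 : ds1.length = 0 := by omega
      simp only [h, if_false]
      rw [show (0 : ℕ) - ds1.length = 0 from by omega, hφ20, ← hφ1l, h0, hφ10]
  · simp only [List.length_append]
    rw [if_neg (show ¬ ds1.length + ds2.length < ds1.length by omega),
      show ds1.length + ds2.length - ds1.length = ds2.length from by omega, hφ2l]
  · have heq1 : ∀ y ≤ ds1.length,
        (if y < ds1.length then φ1 y else φ2 (y - ds1.length)) = φ1 y := by
      intro y hy
      by_cases h : y < ds1.length
      · simp [h]
      · have : y = ds1.length := by omega
        subst this
        simp only [h, if_false, Nat.sub_self, hφ20, hφ1l]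
    intro x hx
    dsimp only
    simp only [List.length_append] at hx
    by_cases h : x < ds1.length
    · rw [heq1 x (le_of_lt h), heq1 (x + 1) (by omega),
        List.getD_append _ _ _ _ h]
      exact hφ1s x h
    · have hx1 : ¬ x < ds1.length := h
      have hx2 : ¬ x + 1 < ds1.length := by omega
      simp only [hx1, hx2, if_false]
      rw [List.getD_append_right _ _ _ _ (by omega),
        show x + 1 - ds1.length = (x - ds1.length) + 1 from by omega]
      exact hφ2s (x - ds1.length) (by omega)

lemma drop_cons {q tl : List Bool} {b : Bool} {s : ℕ} (h : q.drop s = b :: tl) :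
    s < q.length ∧ q.getD s false = b ∧ q.drop (s + 1) = tl := by
  have hlen : s < q.length := by
    by_contra hc
    rw [List.drop_eq_nil_of_le (by omega)] at h
    simp at h
  refine ⟨hlen, ?_, ?_⟩
  · have h0 : 0 < (q.drop s).length := by rw [h]; simp
    have h1 : (List.drop s q).getD 0 false = b := by rw [h]; rfl
    rw [List.getD_eq_getElem _ _ h0, List.getElem_drop] at h1
    rw [List.getD_eq_getElem _ _ hlen]
    simpa using h1
  · rw [← List.drop_drop, h]
    rfl

/-- Core lemma: walking along the all-zigzag pattern realizes the remainder of the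
connecting path `P_(a,r)`, whatever blocks (single edges or zigzags) it consists of. -/
lemma core {a : A} {r : Fin k → A} (hr : r ∈ R) :
    ∀ (L : List (Fin k)) (s : ℕ),
      (qdirs (idxSet a r)).drop s =
        (L.flatMap (fun l => if l ∈ idxSet a r then [true] else [true, false, true]))
          ++ [true] →
      walkAlong ((L.flatMap (fun _ => [true, false, true])) ++ [true])
        (vtx a r hr s) (.top r hr) := by
  intro L
  induction L with
  | nil =>
    intro s hdrop
    simp only [List.flatMap_nil, List.nil_append] at hdrop ⊢
    obtain ⟨hs, hb, _⟩ := drop_cons hdrop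
    have hlen : (qdirs (idxSet a r)).length = s + 1 := by
      have := congrArg List.length hdrop
      simp only [List.length_drop, List.length_cons, List.length_nil] at this
      omega
    have hw : walkAlong [true] (vtx a r hr s) (vtx a r hr (s + 1)) :=
      walkAlong_one (dedge_fwd hr hs hb)
    have : vtx a r hr (s + 1) = DVert.top r hr := by
      rw [show s + 1 = plen a r from by rw [plen, hlen]]
      exact vtx_plen a r hr
    rwa [this] at hw
  | cons l L' ih =>
    intro s hdrop
    rw [List.flatMap_cons, List.append_assoc] at hdrop ⊢
    by_cases hl : l ∈ idxSet a r
    · simp only [hl, if_true, List.cons_append, List.nil_append] at hdrop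
      obtain ⟨hs, hb, htl⟩ := drop_cons hdrop
      refine walkAlong_append (walkAlong_zig (dedge_fwd hr hs hb)) (ih (s + 1) htl)
    · simp only [hl, if_false, List.cons_append, List.nil_append] at hdrop
      obtain ⟨hs1, hb1, htl1⟩ := drop_cons hdrop
      obtain ⟨hs2, hb2, htl2⟩ := drop_cons htl1
      obtain ⟨hs3, hb3, htl3⟩ := drop_cons htl2
      refine walkAlong_append
        (walkAlong_three (dedge_fwd hr hs1 hb1) (dedge_bwd hr hs2 hb2)
          (dedge_fwd hr hs3 hb3)) (ih (s + 3) (by exact htl3))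

/-- From any base vertex one can walk along `Q_∅` to any top vertex. -/
lemma walk_base_top (a : A) {r : Fin k → A} (hr : r ∈ R) :
    walkAlong (qdirs (∅ : Finset (Fin k))) (DVert.base a) (DVert.top r hr) := by
  have hq : qdirs (∅ : Finset (Fin k)) =
      [true] ++ (((List.finRange k).flatMap (fun _ => [true, false, true])) ++ [true]) := by
    simp [qdirs]
  rw [hq]
  have hdrop : (qdirs (idxSet a r)).drop 1 =
      ((List.finRange k).flatMap
        (fun l => if l ∈ idxSet a r then [true] else [true, false, true])) ++ [true] := by
    rfl
  have h0 : (qdirs (idxSet a r)).getD 0 false = true := rfl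
  have hlen0 : 0 < (qdirs (idxSet a r)).length := plen_pos a r
  have hstep : dedge (DVert.base a : DVert R) (vtx a r hr 1) := by
    have := dedge_fwd hr hlen0 h0
    rwa [vtx_zero] at this
  exact walkAlong_append (walkAlong_one hstep) (core hr (List.finRange k) 1 hdrop)

lemma connM_of_walk {m : ℕ} {ds : List Bool} {u v : Fin m → DVert R}
    (h : ∀ i, walkAlong ds (u i) (v i)) : connM u v := by
  choose φ h0 hl hs using h
  have key : ∀ n, n ≤ ds.length → connM u (fun i => φ i n) := by
    intro n
    induction n with
    | zero =>
      intro _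
      have : (fun i => φ i 0) = u := funext h0
      rw [this]
      exact Relation.ReflTransGen.refl
    | succ n ih =>
      intro hn
      refine (ih (by omega)).tail ?_
      have hn' : n < ds.length := by omega
      cases hb : ds.getD n false with
      | true => exact Or.inl (fun i => (hs i n hn').1 hb)
      | false => exact Or.inr (fun i => (hs i n hn').2 hb)
  have hfin := key ds.length le_rfl
  have : (fun i => φ i ds.length) = v := funext hl
  rwa [this] at hfin

lemma connM_symm {m : ℕ} {u v : Fin m → DVert R} (h : connM u v) : connM v u :=
  by
    haveI : Std.Symm (fun x y : Fin m → DVert R =>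
        (∀ i, dedge (x i) (y i)) ∨ (∀ i, dedge (y i) (x i))) :=
      ⟨fun x y hxy => by rcases hxy with h' | h'; exact Or.inr h'; exact Or.inl h'⟩
    exact (Relation.ReflTransGen.symmetric).symm _ _ h

end Aux

/-- For every `m > 0`, both `A^m` and `R^m` lie in the connected component `Δ_m` of
the diagonal in the power digraph `D(A)^m`. -/
theorem Am_Rm_in_diagonal_component {A : Type} [DecidableEq A] {k : ℕ}
    (R : Set (Fin k → A)) (hR : R.Nonempty) (m : ℕ) (hm : 0 < m) :
    (∀ t : Fin m → A, ∃ c : DVert R,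
      connM (fun i => DVert.base (t i)) (fun _ => c)) ∧
    (∀ (rs : Fin m → (Fin k → A)) (h : ∀ i, rs i ∈ R), ∃ c : DVert R,
      connM (fun i => DVert.top (rs i) (h i)) (fun _ => c)) := by
  obtain ⟨r0, hr0⟩ := hR
  constructor
  · intro t
    exact ⟨DVert.top r0 hr0,
      connM_of_walk (fun i => walk_base_top (t i) hr0)⟩
  · intro rs h
    by_cases hA : Nonempty A
    · obtain ⟨a⟩ := hA
      have h1 : connM (fun _ : Fin m => (DVert.base a : DVert R))
          (fun i => DVert.top (rs i) (h i)) :=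
        connM_of_walk (fun i => walk_base_top a (h i))
      have h2 : connM (fun _ : Fin m => (DVert.base a : DVert R))
          (fun _ => DVert.top r0 hr0) :=
        connM_of_walk (fun _ => walk_base_top a hr0)
      exact ⟨DVert.top r0 hr0, (connM_symm h1).trans h2⟩
    · have hk : k = 0 := by
        by_contra hk
        exact hA ⟨r0 ⟨0, Nat.pos_of_ne_zero hk⟩⟩
      subst hk
      have heq : ∀ (r1 r2 : Fin 0 → A) (h1 : r1 ∈ R) (h2 : r2 ∈ R), r1 = r2 →
          DVert.top r1 h1 = (DVert.top r2 h2 : DVert R) := by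
        rintro r1 r2 h1 h2 rfl; rfl
      have : (fun i => DVert.top (rs i) (h i)) =
          (fun _ => (DVert.top r0 hr0 : DVert R)) :=
        funext fun i => heq _ _ _ _ (funext fun j => j.elim0)
      exact ⟨DVert.top r0 hr0, this ▸ Relation.ReflTransGen.refl⟩
end

section
/- Let C, D be subsets of the vertex set of D(A) such that every x ∈ C has some y' ∈ D with x → y', and every y ∈ D has some x' ∈ C with x' → y. If D ⊄ R and c, d are the ⊑-minimal elements of C and D respectively, then c → d is an edge of D(A). -/
/-- Lexicographic (strict) order on tuples, induced by a linear order on `A`. -/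
def lexLt {A : Type} [LinearOrder A] {k : ℕ} (r s : Fin k → A) : Prop :=
  ∃ i, r i < s i ∧ ∀ j, j < i → r j = s j

/-- Lexicographic (strict) order on `A × R`. -/
def pairLexLt {A : Type} [LinearOrder A] {k : ℕ}
    (p q : A × (Fin k → A)) : Prop :=
  p.1 < q.1 ∨ (p.1 = q.1 ∧ lexLt p.2 q.2)

/-- The linear order `⊑` on the vertices of `D(A)`: `x ⊏ y` iff (1) `x, y ∈ A` and
`x ≺ y`, or (2) `x, y ∈ R` and `x ≺_LEX y`, or (3) `lvl x < lvl y`, or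
`lvl x = lvl y`, `x, y ∉ A ∪ R`, `x ∈ P_(a,r)`, `y ∈ P_(b,s)` and either
(4) `(a,r) = (b,s)` and `x` is closer to the initial vertex than `y`, or
(5) `(a,r) ≺_LEX (b,s)`. -/
def sqlt {A : Type} [LinearOrder A] {k : ℕ} {R : Set (Fin k → A)}
    (x y : DVert R) : Prop :=
  (∃ a b, x = DVert.base a ∧ y = DVert.base b ∧ a < b) ∨
  (∃ r hr s hs, x = DVert.top r hr ∧ y = DVert.top s hs ∧ lexLt r s) ∨
  (lvlD x < lvlD y) ∨
  (lvlD x = lvlD y ∧ ∃ a r hr j h1 h2 b s hs j' h1' h2',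
    x = DVert.inner a r hr j h1 h2 ∧ y = DVert.inner b s hs j' h1' h2' ∧
    (((a, r) = (b, s) ∧ j < j') ∨ pairLexLt (a, r) (b, s)))

private def hA (l : List Bool) : ℤ := (l.count true : ℤ) - (l.count false : ℤ)

private lemma hA_append (l1 l2 : List Bool) : hA (l1 ++ l2) = hA l1 + hA l2 := by
  simp [hA, List.count_append]; ring

private lemma phgt_eq (ds : List Bool) (x : ℕ) : phgt ds x = hA (ds.take x) := rfl

private lemma hA_take_append (l1 l2 : List Bool) (j : ℕ) :
    hA ((l1 ++ l2).take j) = hA (l1.take j) + hA (l2.take (j - l1.length)) := by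
  rw [List.take_append, hA_append]

private lemma hA_take_single (j : ℕ) :
    0 ≤ hA ([true].take j) ∧ hA ([true].take j) ≤ 1 ∧ (1 ≤ j → hA ([true].take j) = 1) := by
  cases j with
  | zero => simp [hA]
  | succ n =>
    rw [List.take_of_length_le (by simp)]
    simp [hA]

private lemma hA_take_zig (j : ℕ) :
    0 ≤ hA ([true, false, true].take j) ∧ hA ([true, false, true].take j) ≤ 1 ∧
      (3 ≤ j → hA ([true, false, true].take j) = 1) := by
  match j with
  | 0 => simp [hA]
  | 1 => simp [hA]
  | 2 => norm_num [hA]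
  | (n+3) =>
    rw [List.take_of_length_le (by simp)]
    norm_num [hA]

private lemma hA_mid {k : ℕ} (I : Finset (Fin k)) (L : List (Fin k)) (j : ℕ) :
    0 ≤ hA ((L.flatMap (fun l => if l ∈ I then [true] else [true, false, true])).take j) ∧
    hA ((L.flatMap (fun l => if l ∈ I then [true] else [true, false, true])).take j) ≤ (L.length : ℤ) ∧
    ((L.flatMap (fun l => if l ∈ I then [true] else [true, false, true])).length ≤ j →
      hA ((L.flatMap (fun l => if l ∈ I then [true] else [true, false, true])).take j) = (L.length : ℤ)) := by
  induction L generalizing j with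
  | nil => simp [hA]
  | cons a L ih =>
    rw [List.flatMap_cons, hA_take_append]
    set b : List Bool := if a ∈ I then [true] else [true, false, true] with hb
    have hbp : 0 ≤ hA (b.take j) ∧ hA (b.take j) ≤ 1 ∧ (b.length ≤ j → hA (b.take j) = 1) := by
      by_cases h : a ∈ I
      · rw [hb, if_pos h]; simpa using hA_take_single j
      · rw [hb, if_neg h]; simpa using hA_take_zig j
    have hr := ih (j - b.length)
    simp only [List.length_cons, List.length_append]
    push_cast
    constructor
    · exact add_nonneg hbp.1 hr.1
    constructor
    · have := hbp.2.1; have := hr.2.1; omega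
    · intro hj
      have h1 : hA (b.take j) = 1 := hbp.2.2 (by omega)
      have h2 := hr.2.2 (by omega)
      omega

private lemma qdirs_bounds {k : ℕ} (I : Finset (Fin k)) (j : ℕ) :
    0 ≤ phgt (qdirs I) j ∧ phgt (qdirs I) j ≤ (k : ℤ) + 2 ∧
    ((qdirs I).length ≤ j → phgt (qdirs I) j = (k : ℤ) + 2) := by
  set mid := ((List.finRange k).flatMap
    (fun l => if l ∈ I then [true] else [true, false, true])) with hmid
  have h1 := hA_take_single j
  have hm := hA_mid I (List.finRange k) (j - 1)
  have h2 := hA_take_single (j - (1 + mid.length))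
  rw [List.length_finRange] at hm
  rw [phgt_eq, qdirs, hA_take_append, hA_take_append]
  simp only [List.length_append, List.length_singleton]
  rw [← hmid] at hm ⊢
  have hL : (([true] : List Bool) ++ mid ++ [true]).length = mid.length + 2 := by simp
  refine ⟨by have := h1.1; have := hm.1; have := h2.1; omega, ?_, ?_⟩
  · have := h1.2.1; have := hm.2.1; have := h2.2.1; omega
  · intro hj
    have e1 : hA ([true].take j) = 1 := h1.2.2 (by omega)
    have e2 := hm.2.2 (by omega)
    have e3 : hA ([true].take (j - (1 + mid.length))) = 1 := h2.2.2 (by omega)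
    omega

private lemma phgt_nonneg {k : ℕ} (I : Finset (Fin k)) (j : ℕ) : 0 ≤ phgt (qdirs I) j :=
  (qdirs_bounds I j).1

private lemma phgt_le {k : ℕ} (I : Finset (Fin k)) (j : ℕ) : phgt (qdirs I) j ≤ (k : ℤ) + 2 :=
  (qdirs_bounds I j).2.1

private lemma phgt_len {k : ℕ} (I : Finset (Fin k)) : phgt (qdirs I) (qdirs I).length = (k : ℤ) + 2 :=
  (qdirs_bounds I _).2.2 le_rfl

private lemma qdirs_getD_zero {k : ℕ} (I : Finset (Fin k)) : (qdirs I).getD 0 false = true := by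
  simp [qdirs]

private lemma qdirs_getD_last {k : ℕ} (I : Finset (Fin k)) :
    (qdirs I).getD ((qdirs I).length - 1) false = true := by
  set mid := ((List.finRange k).flatMap
    (fun l => if l ∈ I then [true] else [true, false, true])) with hmid
  have h : qdirs I = ([true] ++ mid) ++ [true] := by simp [qdirs, hmid]
  have hl : (([true] ++ mid) ++ [true]).length - 1 = ([true] ++ mid).length := by simp
  rw [h, hl, List.getD_append_right] <;> simp

private lemma phgt_succ (ds : List Bool) (x : ℕ) (hx : x < ds.length) :
    phgt ds (x + 1) = phgt ds x + (if ds.getD x false = true then 1 else -1) := by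
  have ht : ds.take (x + 1) = ds.take x ++ [ds.getD x false] := by
    rw [List.take_succ]
    congr 1
    rw [List.getD_eq_getElem?_getD]
    simp [List.getElem?_eq_getElem hx]
  rw [phgt_eq, phgt_eq, ht, hA_append]
  cases h : ds.getD x false <;> simp [h, hA]

private lemma pedge_phgt {ds : List Bool} {x y : ℕ} (h : pedge ds x y) :
    phgt ds y = phgt ds x + 1 := by
  rcases h with ⟨rfl, hx, hd⟩ | ⟨rfl, hy, hd⟩
  · rw [phgt_succ ds x hx, hd]; simp
  · have := phgt_succ ds y hy
    rw [hd] at this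
    simp at this
    omega

private lemma isAt_lvl {A : Type} [LinearOrder A] {k : ℕ} {R : Set (Fin k → A)}
    {v : DVert R} {a : A} {r : Fin k → A} {x : ℕ} (h : isAt v a r x) :
    (lvlD v : ℤ) = phgt (qdirs (idxSet a r)) x := by
  cases v with
  | base a' =>
    obtain ⟨rfl, rfl⟩ := (h : a' = a ∧ x = 0)
    simp [lvlD, phgt_eq, hA]
  | top r' hr' =>
    obtain ⟨rfl, rfl⟩ := (h : r' = r ∧ x = plen a r)
    show ((k + 2 : ℕ) : ℤ) = _
    rw [plen, phgt_len]
    push_cast; ring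
  | inner a' r' hr' j hj1 hj2 =>
    obtain ⟨rfl, rfl, rfl⟩ := (h : a' = a ∧ r' = r ∧ x = j)
    simp only [lvlD]
    rw [Int.toNat_of_nonneg (phgt_nonneg _ _)]

private lemma dedge_lvl {A : Type} [LinearOrder A] {k : ℕ} {R : Set (Fin k → A)}
    {u v : DVert R} (h : dedge u v) : lvlD v = lvlD u + 1 := by
  obtain ⟨a, r, hr, x, y, hu, hv, hp⟩ := h
  have h1 := isAt_lvl hu
  have h2 := isAt_lvl hv
  have h3 := pedge_phgt hp
  omega

private lemma sqlt_lvl_le {A : Type} [LinearOrder A] {k : ℕ} {R : Set (Fin k → A)}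
    {u v : DVert R} (h : sqlt u v) : lvlD u ≤ lvlD v := by
  rcases h with ⟨a, b, rfl, rfl, _⟩ | ⟨r, hr, s, hs, rfl, rfl, _⟩ | h | ⟨h, _⟩
  · exact le_rfl
  · exact le_rfl
  · omega
  · omega

private lemma lvlD_le {A : Type} [LinearOrder A] {k : ℕ} {R : Set (Fin k → A)}
    (v : DVert R) : lvlD v ≤ k + 2 := by
  cases v with
  | base a => simp [lvlD]
  | top r hr => exact le_rfl
  | inner a r hr j h1 h2 =>
    have := phgt_le (idxSet a r) j
    show (phgt (qdirs (idxSet a r)) j).toNat ≤ k + 2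
    omega

private lemma no_out_top {A : Type} [LinearOrder A] {k : ℕ} {R : Set (Fin k → A)}
    {r : Fin k → A} {hr : r ∈ R} {v : DVert R} (h : dedge (DVert.top r hr) v) : False := by
  obtain ⟨a, r0, hr0, x, y, hu, hv, hp⟩ := h
  obtain ⟨rfl, rfl⟩ := (hu : r = r0 ∧ x = plen a r0)
  have hpl : plen a r = (qdirs (idxSet a r)).length := rfl
  rcases hp with ⟨_, hlt, _⟩ | ⟨hxy, hy, hd⟩
  · omega
  · have hy' : y = (qdirs (idxSet a r)).length - 1 := by omega
    rw [hy', qdirs_getD_last] at hd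
    cases hd

private lemma no_in_base {A : Type} [LinearOrder A] {k : ℕ} {R : Set (Fin k → A)}
    {a : A} {u : DVert R} (h : dedge u (DVert.base a)) : False := by
  obtain ⟨a0, r0, hr0, x, y, hu, hv, hp⟩ := h
  obtain ⟨rfl, rfl⟩ := (hv : a = a0 ∧ y = 0)
  rcases hp with ⟨h1, _, _⟩ | ⟨h1, h2, h3⟩
  · omega
  · rw [qdirs_getD_zero] at h3
    cases h3

private lemma lexLt_asymm {A : Type} [LinearOrder A] {k : ℕ} {r s : Fin k → A}
    (h1 : lexLt r s) (h2 : lexLt s r) : False := by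
  obtain ⟨i, hi, hj⟩ := h1
  obtain ⟨i', hi', hj'⟩ := h2
  rcases lt_trichotomy i i' with h | h | h
  · exact absurd (hj' i h).symm (ne_of_lt hi)
  · subst h; exact absurd hi' (not_lt.2 (le_of_lt hi))
  · exact absurd (hj i' h) (ne_of_gt hi')

private lemma lexLt_irrefl {A : Type} [LinearOrder A] {k : ℕ} {r : Fin k → A}
    (h : lexLt r r) : False := by
  obtain ⟨i, hi, _⟩ := h
  exact lt_irrefl _ hi

private lemma pairLexLt_asymm {A : Type} [LinearOrder A] {k : ℕ} {p q : A × (Fin k → A)}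
    (h1 : pairLexLt p q) (h2 : pairLexLt q p) : False := by
  rcases h1 with h1 | ⟨e1, l1⟩ <;> rcases h2 with h2 | ⟨e2, l2⟩
  · exact absurd h2 (lt_asymm h1)
  · rw [e2] at h1; exact lt_irrefl _ h1
  · rw [e1] at h2; exact lt_irrefl _ h2
  · exact lexLt_asymm l1 l2

private lemma pairLexLt_irrefl {A : Type} [LinearOrder A] {k : ℕ} {p : A × (Fin k → A)}
    (h : pairLexLt p p) : False := by
  rcases h with h | ⟨_, l⟩
  · exact lt_irrefl _ h
  · exact lexLt_irrefl l

/-- If every `x ∈ C` has an out-neighbour in `D`, every `y ∈ D` has an in-neighbour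
in `C`, and `D ⊄ R`, then the `⊑`-minimal elements `c` of `C` and `d` of `D`
satisfy `c → d`. -/
theorem minimal_elements_edge {A : Type} [LinearOrder A] {k : ℕ}
    (R : Set (Fin k → A)) (C D : Set (DVert R))
    (hC : ∀ x ∈ C, ∃ y' ∈ D, dedge x y')
    (hD : ∀ y ∈ D, ∃ x' ∈ C, dedge x' y)
    (hDR : ¬ D ⊆ {v : DVert R | ∃ r hr, v = DVert.top r hr})
    (c d : DVert R)
    (hc : c ∈ C ∧ ∀ x ∈ C, x = c ∨ sqlt c x)
    (hd : d ∈ D ∧ ∀ y ∈ D, y = d ∨ sqlt d y) :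
    dedge c d := by
  obtain ⟨hcC, hcmin⟩ := hc
  obtain ⟨hdD, hdmin⟩ := hd
  obtain ⟨y', hy'D, hcy'⟩ := hC c hcC
  obtain ⟨x', hx'C, hx'd⟩ := hD d hdD
  have hlY : lvlD y' = lvlD c + 1 := dedge_lvl hcy'
  have hlD : lvlD d = lvlD x' + 1 := dedge_lvl hx'd
  rcases hcmin x' hx'C with rfl | hcx
  · exact hx'd
  rcases hdmin y' hy'D with rfl | hdy
  · exact hcy'
  have hle1 : lvlD c ≤ lvlD x' := sqlt_lvl_le hcx
  have hle2 : lvlD d ≤ lvlD y' := sqlt_lvl_le hdy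
  have hsucc : lvlD d = lvlD c + 1 := by omega
  have hdnt : ∀ (s : Fin k → A) (hs : s ∈ R), d ≠ DVert.top s hs := by
    rintro s hs rfl
    obtain ⟨y0, hy0D, hy0⟩ := Set.not_subset.mp hDR
    rcases hdmin y0 hy0D with rfl | h
    · exact hy0 ⟨s, hs, rfl⟩
    · rcases h with ⟨a, b, heq, _, _⟩ | ⟨r1, hr1, s1, hs1, _, heq, _⟩ | h | ⟨_, a, r, hr, j, h1, h2, b2, s2, hs2, j2, h12, h22, heq, _, _⟩
      · cases heq
      · exact hy0 ⟨s1, hs1, heq⟩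
      · have hb := lvlD_le y0
        have hk : lvlD (DVert.top s hs : DVert R) = k + 2 := rfl
        omega
      · cases heq
  exfalso
  rcases hcx with ⟨a, b, rfl, rfl, hab⟩ | ⟨r1, hr1, s1, hs1, rfl, rfl, _⟩ | hlt | ⟨_, a, r, hr, j, hj1, hj2, b, s, hs, jx, hk1, hk2, rfl, rfl, hordc⟩
  · -- c = base a, x' = base b, a < b
    rcases hdy with ⟨a2, b2, heqd, _, _⟩ | ⟨r2, hr2, s2, hs2, heqd, _, _⟩ | hlt2 | ⟨_, a2, r2, hr2, j2, hj21, hj22, b2, s2, hs2, jy, hjy1, hjy2, rfl, rfl, hordd⟩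
    · rw [heqd] at hx'd; exact no_in_base hx'd
    · exact hdnt _ _ heqd
    · omega
    · obtain ⟨a0, r0, hr0, px, pd, hisx, hisd, hped⟩ := hx'd
      obtain ⟨rfl, rfl⟩ := (hisx : b = a0 ∧ px = 0)
      obtain ⟨hba2, hrr2, hpd⟩ := (hisd : a2 = b ∧ r2 = r0 ∧ pd = j2)
      obtain ⟨a1, s0, hs0, qx, qy, hisc, hisy, hqed⟩ := hcy'
      obtain ⟨rfl, rfl⟩ := (hisc : a = a1 ∧ qx = 0)
      obtain ⟨hbb2, hss2, hqy⟩ := (hisy : b2 = a ∧ s2 = s0 ∧ qy = jy)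
      have hj2' : j2 = 1 := by
        rcases hped with ⟨h1, _, _⟩ | ⟨h1, _, _⟩ <;> omega
      have hjy' : jy = 1 := by
        rcases hqed with ⟨h1, _, _⟩ | ⟨h1, _, _⟩ <;> omega
      rcases hordd with ⟨_, hlt3⟩ | hp
      · omega
      · have hp' : a2 < b2 ∨ (a2 = b2 ∧ lexLt r2 s2) := hp
        rw [hba2, hbb2] at hp'
        rcases hp' with hba | ⟨hba, _⟩
        · exact absurd hab (lt_asymm hba)
        · rw [hba] at hab; exact lt_irrefl _ hab
  · exact no_out_top hx'd
  · omega
  · -- c = inner a r hr j, x' = inner b s hs jx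
    rcases hdy with ⟨a2, b2, heqd, _, _⟩ | ⟨r2, hr2, s2, hs2, heqd, _, _⟩ | hlt2 | ⟨_, a2, r2, hr2, j2, hj21, hj22, b2, s2, hs2, jy, hjy1, hjy2, rfl, rfl, hordd⟩
    · rw [heqd] at hx'd; exact no_in_base hx'd
    · exact hdnt _ _ heqd
    · omega
    · obtain ⟨a0, r0, hr0, px, pd, hisx, hisd, hped⟩ := hx'd
      obtain ⟨rfl, rfl, hpx⟩ := (hisx : b = a0 ∧ s = r0 ∧ px = jx)
      obtain ⟨hba2, hrr2, hpd⟩ := (hisd : a2 = b ∧ r2 = s ∧ pd = j2)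
      obtain ⟨a1, s0, hs0, qx, qy, hisc, hisy, hqed⟩ := hcy'
      obtain ⟨rfl, rfl, hqx⟩ := (hisc : a = a1 ∧ r = s0 ∧ qx = j)
      obtain ⟨hbb2, hss2, hqy⟩ := (hisy : b2 = a ∧ s2 = r ∧ qy = jy)
      rcases hordc with ⟨heq1, hjx⟩ | hp1
      · rcases hordd with ⟨heq2, hjy⟩ | hp2
        · -- (a, r) = (b, s), j < jx, j2 < jy
          rw [Prod.mk.injEq] at heq1
          obtain ⟨rfl, rfl⟩ := heq1
          subst hba2
          subst hrr2
          rcases hped with ⟨e1, _, _⟩ | ⟨e1, _, _⟩ <;> rcases hqed with ⟨e2, _, _⟩ | ⟨e2, _, _⟩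
          · omega
          · omega
          · have hjj : j2 = j := by omega
            subst hjj
            simp only [lvlD] at hsucc
            omega
          · omega
        · rw [hba2, hrr2, hbb2, hss2] at hp2
          rw [← heq1] at hp2
          exact pairLexLt_irrefl hp2
      · rcases hordd with ⟨heq2, hjy⟩ | hp2
        · rw [hba2, hrr2, hbb2, hss2] at heq2
          rw [Prod.mk.injEq] at heq2
          obtain ⟨rfl, rfl⟩ := heq2
          exact pairLexLt_irrefl hp1
        · rw [hba2, hrr2, hbb2, hss2] at hp2
          exact pairLexLt_asymm hp1 hp2
end
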